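/- Let k ≥ 1 be an integer and set ρ* = 1 − 1/(2k). Define P_k(a,b) = (1/4 + ρ*/4)·((1+a)^{2k}(1+b)^{2k} + (1−a)^{2k}(1−b)^{2k}) + (1/4 − ρ*/4)·((1+a)^{2k}(1−b)^{2k} + (1−a)^{2k}(1+b)^{2k}) − 1; define Q_{k,0}(t) = −1 + (1/2 + ρ*/2)·(1+t)^{2k} + (1/2 − ρ*/2)·Σ_{j=0}^{k} C(2k,2j)·(1−t)^{2k−2j}·(−4t)^{j}, and for 1 ≤ i ≤ k define Q_{k,i}(t) = (1/2 + ρ*/2)·C(2k,2i)·(1+t)^{2k−2i} + (1/2 − ρ*/2)·Σ_{j=i}^{k} C(2k,2j)·(1−t)^{2k−2j}·C(j,i)·(−4t)^{j−i}. Then for all real a, b: P_k(a,b) = Σ_{i=0}^{k} Q_{k,i}(ab) · (a+b)^{2i}. -/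

import Mathlib

/-- The coefficient polynomials `Q_{k,i}(t)` (with `ρ* = 1 − 1/(2k)`):
`Q_{k,0}(t) = −1 + (1/2 + ρ*/2)(1+t)^{2k}
            + (1/2 − ρ*/2) Σ_{j=0}^{k} C(2k,2j) (1−t)^{2k−2j} (−4t)^j`, and for `i ≥ 1`
`Q_{k,i}(t) = (1/2 + ρ*/2) C(2k,2i) (1+t)^{2k−2i}
            + (1/2 − ρ*/2) Σ_{j=i}^{k} C(2k,2j) (1−t)^{2k−2j} C(j,i) (−4t)^{j−i}`. -/
noncomputable def Qcoeff (k i : ℕ) (t : ℝ) : ℝ :=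
  if i = 0 then
    -1 + (1/2 + (1 - 1/(2*(k:ℝ)))/2) * (1+t)^(2*k)
      + (1/2 - (1 - 1/(2*(k:ℝ)))/2) *
        ∑ j ∈ Finset.range (k+1),
          ((2*k).choose (2*j) : ℝ) * (1-t)^(2*k-2*j) * (-4*t)^j
  else
    (1/2 + (1 - 1/(2*(k:ℝ)))/2) * ((2*k).choose (2*i) : ℝ) * (1+t)^(2*k-2*i)
      + (1/2 - (1 - 1/(2*(k:ℝ)))/2) *
        ∑ j ∈ Finset.Icc i k,
          ((2*k).choose (2*j) : ℝ) * (1-t)^(2*k-2*j) * (j.choose i : ℝ) * (-4*t)^(j-i)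

/-- Sum over even indices. -/
lemma even_sum (n : ℕ) (g : ℕ → ℝ) :
    ∑ m ∈ Finset.range (2*n+1), (1 + (-1:ℝ)^m) * g m
      = 2 * ∑ i ∈ Finset.range (n+1), g (2*i) := by
  induction n with
  | zero => norm_num
  | succ n ih =>
    have h : 2*(n+1)+1 = (2*n+1) + 1 + 1 := by ring
    rw [h, Finset.sum_range_succ, Finset.sum_range_succ, ih,
      Finset.sum_range_succ (fun i => g (2*i)) (n+1)]
    have e1 : (-1:ℝ)^(2*n+1) = -1 := by
      rw [pow_succ, pow_mul]; norm_num
    have e2 : (-1:ℝ)^(2*n+1+1) = 1 := by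
      rw [pow_succ, e1]; norm_num
    rw [e1, e2]
    have h2 : 2*n+1+1 = 2*(n+1) := by ring
    rw [h2]; ring

lemma pair_pow (k : ℕ) (x y : ℝ) :
    (x + y)^(2*k) + (x - y)^(2*k)
      = 2 * ∑ i ∈ Finset.range (k+1),
          ((2*k).choose (2*i) : ℝ) * x^(2*k-2*i) * y^(2*i) := by
  have h1 : (x + y)^(2*k)
      = ∑ m ∈ Finset.range (2*k+1), y^m * x^(2*k-m) * ((2*k).choose m : ℝ) := by
    rw [add_comm x y, add_pow]
  have h2 : (x - y)^(2*k)
      = ∑ m ∈ Finset.range (2*k+1),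
          (-1:ℝ)^m * (y^m * x^(2*k-m) * ((2*k).choose m : ℝ)) := by
    have hxy : x - y = -y + x := by ring
    rw [hxy, add_pow]
    refine Finset.sum_congr rfl fun m _ => ?_
    rw [neg_pow]; ring
  rw [h1, h2, ← Finset.sum_add_distrib]
  have h3 : ∑ m ∈ Finset.range (2*k+1),
      (y^m * x^(2*k-m) * ((2*k).choose m : ℝ)
        + (-1:ℝ)^m * (y^m * x^(2*k-m) * ((2*k).choose m : ℝ)))
      = ∑ m ∈ Finset.range (2*k+1),
        (1 + (-1:ℝ)^m) * (y^m * x^(2*k-m) * ((2*k).choose m : ℝ)) := by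
    refine Finset.sum_congr rfl fun m _ => ?_; ring
  rw [h3, even_sum k (fun m => y^m * x^(2*k-m) * ((2*k).choose m : ℝ))]
  congr 1
  refine Finset.sum_congr rfl fun i _ => ?_
  ring

/-- The summand after full expansion. -/
noncomputable def Fterm (k : ℕ) (a b : ℝ) (i j : ℕ) : ℝ :=
  ((2*k).choose (2*j) : ℝ) * (1-a*b)^(2*k-2*j) * (j.choose i : ℝ)
    * (-4*(a*b))^(j-i) * (a+b)^(2*i)

lemma swap_sum (k : ℕ) (F : ℕ → ℕ → ℝ) :
    ∑ j ∈ Finset.range (k+1), ∑ i ∈ Finset.range (j+1), F j i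
      = ∑ i ∈ Finset.range (k+1), ∑ j ∈ Finset.Icc i k, F j i := by
  refine Finset.sum_comm' ?_
  intro j i
  simp only [Finset.mem_range, Finset.mem_Icc]
  omega

/-- For `k ≥ 1`, `ρ* = 1 − 1/(2k)`, and all real `a, b`:
`P_k(a,b) = Σ_{i=0}^{k} Q_{k,i}(ab) (a+b)^{2i}`. -/
theorem stmt_17 (k : ℕ) (hk : 1 ≤ k) (a b : ℝ) :
    (1/4 + (1 - 1/(2*(k:ℝ)))/4) *
        ((1+a)^(2*k) * (1+b)^(2*k) + (1-a)^(2*k) * (1-b)^(2*k))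
      + (1/4 - (1 - 1/(2*(k:ℝ)))/4) *
        ((1+a)^(2*k) * (1-b)^(2*k) + (1-a)^(2*k) * (1+b)^(2*k))
      - 1
    = ∑ i ∈ Finset.range (k+1), Qcoeff k i (a*b) * (a+b)^(2*i) := by
  -- first bracket
  have e1 : (1+a)^(2*k) * (1+b)^(2*k) = ((1+a*b) + (a+b))^(2*k) := by
    rw [← mul_pow]; congr 1; ring
  have e2 : (1-a)^(2*k) * (1-b)^(2*k) = ((1+a*b) - (a+b))^(2*k) := by
    rw [← mul_pow]; congr 1; ring
  have e3 : (1+a)^(2*k) * (1-b)^(2*k) = ((1-a*b) + (a-b))^(2*k) := by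
    rw [← mul_pow]; congr 1; ring
  have e4 : (1-a)^(2*k) * (1+b)^(2*k) = ((1-a*b) - (a-b))^(2*k) := by
    rw [← mul_pow]; congr 1; ring
  have hb1 : (1+a)^(2*k) * (1+b)^(2*k) + (1-a)^(2*k) * (1-b)^(2*k)
      = 2 * ∑ i ∈ Finset.range (k+1),
          ((2*k).choose (2*i) : ℝ) * (1+a*b)^(2*k-2*i) * (a+b)^(2*i) := by
    rw [e1, e2, pair_pow]
  -- expansion of (a-b)^(2j)
  have hpow : ∀ j : ℕ, (a-b)^(2*j)
      = ∑ i ∈ Finset.range (j+1),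
          (a+b)^(2*i) * (-4*(a*b))^(j-i) * (j.choose i : ℝ) := by
    intro j
    have h : (a-b)^(2*j) = ((a+b)^2 + (-4*(a*b)))^j := by
      rw [pow_mul]; congr 1; ring
    rw [h, add_pow]
    refine Finset.sum_congr rfl fun i _ => ?_
    rw [← pow_mul]
  have hb2 : (1+a)^(2*k) * (1-b)^(2*k) + (1-a)^(2*k) * (1+b)^(2*k)
      = 2 * ∑ i ∈ Finset.range (k+1), ∑ j ∈ Finset.Icc i k, Fterm k a b i j := by
    rw [e3, e4, pair_pow]
    congr 1
    rw [← swap_sum k (fun j i => Fterm k a b i j)]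
    refine Finset.sum_congr rfl fun j _ => ?_
    rw [hpow j, Finset.mul_sum]
    refine Finset.sum_congr rfl fun i _ => ?_
    simp only [Fterm]; ring
  -- RHS analysis
  have hQ : ∀ i : ℕ, Qcoeff k i (a*b) * (a+b)^(2*i)
      = (if i = 0 then (-1:ℝ) else 0)
        + (1/2 + (1 - 1/(2*(k:ℝ)))/2) * (((2*k).choose (2*i) : ℝ) * (1+a*b)^(2*k-2*i) * (a+b)^(2*i))
        + (1/2 - (1 - 1/(2*(k:ℝ)))/2) * ∑ j ∈ Finset.Icc i k, Fterm k a b i j := by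
    intro i
    by_cases h0 : i = 0
    · subst h0
      have hIcc : Finset.Icc 0 k = Finset.range (k+1) := by
        ext x; simp [Nat.lt_succ_iff]
      simp only [Qcoeff, if_pos, hIcc, Fterm, mul_zero, pow_zero, mul_one,
        Nat.choose_zero_right, Nat.cast_one, Nat.sub_zero, reduceIte]
      ring
    · simp only [Qcoeff, if_neg h0, Fterm]
      rw [zero_add, add_mul]
      congr 1
      · ring
      · rw [Finset.mul_sum, Finset.sum_mul, Finset.mul_sum]
        refine Finset.sum_congr rfl fun j _ => ?_
        ring
  rw [Finset.sum_congr rfl (fun i _ => hQ i)]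
  rw [Finset.sum_add_distrib, Finset.sum_add_distrib, ← Finset.mul_sum, ← Finset.mul_sum]
  have hione : ∑ i ∈ Finset.range (k+1), (if i = 0 then (-1:ℝ) else 0) = -1 := by
    rw [Finset.sum_ite_eq' (Finset.range (k+1)) 0 (fun _ => (-1:ℝ))]
    simp
  rw [hione, hb1, hb2]
  ring
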